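/- Let g : ℝ^{m×n} → ℝ be convex and differentiable and λ > 0. If (A,B) is a critical point of φ(A,B) = g(AᵀB) + (λ/2)(‖A‖_F² + ‖B‖_F²) satisfying ‖∇g(AᵀB)‖_op ≤ λ, then D = AᵀB is a global minimizer of ψ(D) = g(D) + λ‖D‖_*. -/

import Mathlib

open Matrix

attribute [local instance] Matrix.normedAddCommGroup Matrix.normedSpace

/-- Frobenius inner product of two real matrices. -/
noncomputable def frobInner {m n : Type*} [Fintype m] [Fintype n]
    (A B : Matrix m n ℝ) : ℝ :=
  ∑ i, ∑ j, A i j * B i j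

/-- Nuclear norm of a real matrix: the sum of its singular values. -/
noncomputable def nuclearNorm {m n : Type*} [Fintype m] [Fintype n] [DecidableEq n]
    (C : Matrix m n ℝ) : ℝ :=
  ∑ i, Real.sqrt ((show (Cᵀ * C).IsHermitian by
    simpa using Matrix.isHermitian_conjTranspose_mul_self C).eigenvalues i)

/-- Operator (spectral) norm of a real matrix, i.e. the norm of the induced
linear map between Euclidean spaces. -/
noncomputable def opNorm {m n : Type*} [Fintype m] [Fintype n] [DecidableEq n]
    (C : Matrix m n ℝ) : ℝ :=
  ‖LinearMap.toContinuousLinearMap (Matrix.toEuclideanLin C)‖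

lemma Matrix.isHermitian_transpose_mul_self {m n : Type*} [Fintype m] (C : Matrix m n ℝ) :
    (Cᵀ * C).IsHermitian := by
  simpa using Matrix.isHermitian_conjTranspose_mul_self C

section Helpers

lemma frob_trace {m n : Type*} [Fintype m] [Fintype n] (X Y : Matrix m n ℝ) :
    frobInner X Y = Matrix.trace (Xᵀ * Y) := by
  simp only [frobInner, Matrix.trace, Matrix.diag_apply, Matrix.mul_apply,
    Matrix.transpose_apply]
  exact Finset.sum_comm

lemma trace_tmul_self_nonneg {m n : Type*} [Fintype m] [Fintype n] (X : Matrix m n ℝ) :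
    0 ≤ Matrix.trace (Xᵀ * X) := by
  rw [← frob_trace]
  exact Finset.sum_nonneg fun i _ => Finset.sum_nonneg fun j _ => mul_self_nonneg _

lemma trace_proj_nonneg {d m : Type*} [Fintype d] [Fintype m] (A : Matrix d m ℝ)
    (Q : Matrix m m ℝ) (hQt : Qᵀ = Q) (hQQ : Q * Q = Q) :
    0 ≤ Matrix.trace (Aᵀ * A * Q) := by
  have h2 : (A * Q)ᵀ * (A * Q) = Q * (Aᵀ * A * Q) := by
    rw [Matrix.transpose_mul, hQt]
    simp only [Matrix.mul_assoc]
  have h3 : Matrix.trace (Q * (Aᵀ * A * Q)) = Matrix.trace (Aᵀ * A * Q) := by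
    rw [Matrix.trace_mul_comm, Matrix.mul_assoc, hQQ]
  calc (0:ℝ) ≤ Matrix.trace ((A * Q)ᵀ * (A * Q)) := trace_tmul_self_nonneg _
    _ = Matrix.trace (Aᵀ * A * Q) := by rw [h2, h3]

lemma sum_dot_eq_trace {m n : Type*} [Fintype m] [Fintype n]
    (U : Matrix m n ℝ) (M : Matrix m m ℝ) :
    ∑ j, (fun i => U i j) ⬝ᵥ (M *ᵥ fun i => U i j) = Matrix.trace (M * (U * Uᵀ)) := by
  simp only [Matrix.trace, Matrix.diag_apply, Matrix.mul_apply, Matrix.transpose_apply,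
    dotProduct, Matrix.mulVec, Finset.mul_sum, Finset.sum_mul]
  rw [Finset.sum_comm]
  congr 1; ext j
  rw [Finset.sum_comm]
  congr 1; ext i
  congr 1; ext k
  ring

lemma dot_shift {d m n : Type*} [Fintype d] [Fintype m] [Fintype n]
    (P : Matrix d m ℝ) (Q : Matrix d n ℝ) (u : m → ℝ) (v : n → ℝ) :
    u ⬝ᵥ ((Pᵀ * Q) *ᵥ v) = (P *ᵥ u) ⬝ᵥ (Q *ᵥ v) := by
  rw [← Matrix.mulVec_mulVec, Matrix.dotProduct_mulVec, Matrix.vecMul_transpose]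

lemma dot_self_nonneg {k : Type*} [Fintype k] (x : k → ℝ) : 0 ≤ x ⬝ᵥ x :=
  Finset.sum_nonneg fun i _ => mul_self_nonneg _

lemma abs_dot_le {k : Type*} [Fintype k] (x y : k → ℝ) :
    |x ⬝ᵥ y| ≤ Real.sqrt (x ⬝ᵥ x) * Real.sqrt (y ⬝ᵥ y) := by
  rw [abs_le]
  constructor
  · have h := Real.sum_mul_le_sqrt_mul_sqrt Finset.univ (fun i => -x i) y
    simp only [neg_mul, Finset.sum_neg_distrib, neg_sq] at h
    simp only [dotProduct, sq] at *
    linarith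
  · have h := Real.sum_mul_le_sqrt_mul_sqrt Finset.univ x y
    simp only [dotProduct, sq] at *
    linarith

lemma dot_le_half {k : Type*} [Fintype k] (a b : k → ℝ) :
    a ⬝ᵥ b ≤ (a ⬝ᵥ a + b ⬝ᵥ b) / 2 := by
  have h := dot_self_nonneg (a - b)
  simp only [sub_dotProduct, dotProduct_sub] at h
  have hc : a ⬝ᵥ b = b ⬝ᵥ a := dotProduct_comm a b
  linarith

lemma euclid_norm_eq {k : Type*} [Fintype k] (y : k → ℝ) :
    ‖(WithLp.equiv 2 (k → ℝ)).symm y‖ = Real.sqrt (y ⬝ᵥ y) := by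
  rw [EuclideanSpace.norm_eq]
  congr 1
  simp [dotProduct, Real.norm_eq_abs, sq_abs, sq]

lemma mulVec_dot_le {m n : Type*} [Fintype m] [Fintype n] [DecidableEq n]
    (Z : Matrix m n ℝ) (x : n → ℝ) :
    Real.sqrt ((Z *ᵥ x) ⬝ᵥ (Z *ᵥ x)) ≤ opNorm Z * Real.sqrt (x ⬝ᵥ x) := by
  have h := (LinearMap.toContinuousLinearMap (Matrix.toEuclideanLin Z)).le_opNorm
    ((WithLp.equiv 2 (n → ℝ)).symm x)
  rw [LinearMap.coe_toContinuousLinearMap'] at h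
  rw [Matrix.toEuclideanLin_apply] at h
  change ‖(WithLp.equiv 2 (m → ℝ)).symm (Z *ᵥ x)‖ ≤ _ at h
  rw [euclid_norm_eq, euclid_norm_eq] at h
  exact h

end Helpers

section Eigen

variable {m n : ℕ}

lemma VVt_eq_one (D : Matrix (Fin m) (Fin n) ℝ) :
    (Matrix.of fun i j => ((Matrix.isHermitian_transpose_mul_self D).eigenvectorBasis j) i) *
    (Matrix.of fun i j => ((Matrix.isHermitian_transpose_mul_self D).eigenvectorBasis j) i)ᵀ
      = 1 := by
  set hD := Matrix.isHermitian_transpose_mul_self D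
  rw [← mul_eq_one_comm]
  ext j k
  have := orthonormal_iff_ite.mp hD.eigenvectorBasis.orthonormal j k
  simp only [PiLp.inner_apply, RCLike.inner_apply, starRingEnd_apply, star_trivial] at this
  rw [Finset.sum_congr rfl fun x _ => mul_comm _ _] at this
  simp [Matrix.mul_apply, Matrix.one_apply, this]

lemma frob_expand (D Z : Matrix (Fin m) (Fin n) ℝ) :
    frobInner Z D = ∑ j,
      (Z *ᵥ fun i => ((Matrix.isHermitian_transpose_mul_self D).eigenvectorBasis j) i)
      ⬝ᵥ (D *ᵥ fun i => ((Matrix.isHermitian_transpose_mul_self D).eigenvectorBasis j) i) := by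
  set hD := Matrix.isHermitian_transpose_mul_self D
  set V : Matrix (Fin n) (Fin n) ℝ := Matrix.of fun i j => (hD.eigenvectorBasis j) i with hV
  have h1 : ∀ j, (fun i => (hD.eigenvectorBasis j) i) = (fun i => V i j) := fun j => rfl
  calc frobInner Z D = Matrix.trace (Zᵀ * D) := frob_trace Z D
    _ = Matrix.trace ((Zᵀ * D) * (V * Vᵀ)) := by rw [VVt_eq_one D]; simp
    _ = ∑ j, (fun i => V i j) ⬝ᵥ ((Zᵀ * D) *ᵥ fun i => V i j) := (sum_dot_eq_trace V _).symm
    _ = _ := by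
        refine Finset.sum_congr rfl fun j _ => ?_
        rw [h1 j, dot_shift]

lemma eigen_dot_self (D : Matrix (Fin m) (Fin n) ℝ) (j : Fin n) :
    (D *ᵥ fun i => ((Matrix.isHermitian_transpose_mul_self D).eigenvectorBasis j) i) ⬝ᵥ
    (D *ᵥ fun i => ((Matrix.isHermitian_transpose_mul_self D).eigenvectorBasis j) i)
      = (Matrix.isHermitian_transpose_mul_self D).eigenvalues j := by
  set hD := Matrix.isHermitian_transpose_mul_self D
  set v : Fin n → ℝ := fun i => (hD.eigenvectorBasis j) i with hv
  have horth := orthonormal_iff_ite.mp hD.eigenvectorBasis.orthonormal j j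
  simp only [PiLp.inner_apply, RCLike.inner_apply, starRingEnd_apply, star_trivial,
    if_pos rfl] at horth
  have hnorm : v ⬝ᵥ v = 1 := horth
  have heig : (Dᵀ * D) *ᵥ v = hD.eigenvalues j • v := hD.mulVec_eigenvectorBasis j
  calc (D *ᵥ v) ⬝ᵥ (D *ᵥ v) = v ⬝ᵥ ((Dᵀ * D) *ᵥ v) := (dot_shift D D v v).symm
    _ = v ⬝ᵥ (hD.eigenvalues j • v) := by rw [heig]
    _ = hD.eigenvalues j * (v ⬝ᵥ v) := by rw [dotProduct_smul]; rfl
    _ = hD.eigenvalues j := by rw [hnorm, mul_one]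

lemma eigenvalues_nn (D : Matrix (Fin m) (Fin n) ℝ) (j : Fin n) :
    0 ≤ (Matrix.isHermitian_transpose_mul_self D).eigenvalues j := by
  have hpsd : (Dᵀ * D).PosSemidef := by
    have h : Dᵀ = Dᴴ := by ext i j; simp [Matrix.conjTranspose_apply]
    rw [h]; exact Matrix.posSemidef_conjTranspose_mul_self D
  exact hpsd.eigenvalues_nonneg j

lemma nuclearNorm_nonneg (D : Matrix (Fin m) (Fin n) ℝ) : 0 ≤ nuclearNorm D :=
  Finset.sum_nonneg fun i _ => Real.sqrt_nonneg _

lemma abs_frobInner_le (Z D : Matrix (Fin m) (Fin n) ℝ) :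
    |frobInner Z D| ≤ opNorm Z * nuclearNorm D := by
  set hD := Matrix.isHermitian_transpose_mul_self D
  set v : Fin n → (Fin n → ℝ) := fun j i => (hD.eigenvectorBasis j) i with hv
  have hopn : 0 ≤ opNorm Z := norm_nonneg _
  have key : ∀ j, |(Z *ᵥ v j) ⬝ᵥ (D *ᵥ v j)| ≤ opNorm Z * Real.sqrt (hD.eigenvalues j) := by
    intro j
    have hv1 : v j ⬝ᵥ v j = 1 := by
      have horth := orthonormal_iff_ite.mp hD.eigenvectorBasis.orthonormal j j
      simp only [PiLp.inner_apply, RCLike.inner_apply, starRingEnd_apply, star_trivial,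
        if_pos rfl] at horth
      exact horth
    have h1 : Real.sqrt ((Z *ᵥ v j) ⬝ᵥ (Z *ᵥ v j)) ≤ opNorm Z := by
      have := mulVec_dot_le Z (v j)
      rwa [hv1, Real.sqrt_one, mul_one] at this
    have h2 : Real.sqrt ((D *ᵥ v j) ⬝ᵥ (D *ᵥ v j)) = Real.sqrt (hD.eigenvalues j) := by
      rw [eigen_dot_self D j]
    calc |(Z *ᵥ v j) ⬝ᵥ (D *ᵥ v j)|
        ≤ Real.sqrt ((Z *ᵥ v j) ⬝ᵥ (Z *ᵥ v j)) * Real.sqrt ((D *ᵥ v j) ⬝ᵥ (D *ᵥ v j)) :=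
          abs_dot_le _ _
      _ ≤ opNorm Z * Real.sqrt (hD.eigenvalues j) := by
          rw [h2]; exact mul_le_mul_of_nonneg_right h1 (Real.sqrt_nonneg _)
  calc |frobInner Z D| = |∑ j, (Z *ᵥ v j) ⬝ᵥ (D *ᵥ v j)| := by rw [frob_expand D Z]
    _ ≤ ∑ j, |(Z *ᵥ v j) ⬝ᵥ (D *ᵥ v j)| := Finset.abs_sum_le_sum_abs _ _
    _ ≤ ∑ j, opNorm Z * Real.sqrt (hD.eigenvalues j) :=
        Finset.sum_le_sum fun j _ => key j
    _ = opNorm Z * nuclearNorm D := by rw [nuclearNorm, Finset.mul_sum]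

end Eigen

section NuclearBound
variable {d m n : ℕ}

lemma nuclear_le (P : Matrix (Fin d) (Fin m) ℝ) (Q : Matrix (Fin d) (Fin n) ℝ) :
    nuclearNorm (Pᵀ * Q) ≤ (frobInner P P + frobInner Q Q) / 2 := by
  set D := Pᵀ * Q with hDdef
  set hD := Matrix.isHermitian_transpose_mul_self D with hhD
  set μ : Fin n → ℝ := hD.eigenvalues with hμ
  set v : Fin n → (Fin n → ℝ) := fun j i => (hD.eigenvectorBasis j) i with hv
  set u : Fin n → (Fin m → ℝ) := fun j => (Real.sqrt (μ j))⁻¹ • (D *ᵥ v j) with hu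
  have hμnn : ∀ j, 0 ≤ μ j := fun j => eigenvalues_nn D j
  have horth : ∀ j k, v j ⬝ᵥ v k = if j = k then 1 else 0 := by
    intro j k
    have := orthonormal_iff_ite.mp hD.eigenvectorBasis.orthonormal j k
    rw [dotProduct_comm]
    simpa [PiLp.inner_apply, RCLike.inner_apply, dotProduct] using this
  have hDv : ∀ j k, (D *ᵥ v j) ⬝ᵥ (D *ᵥ v k) = μ k * (if j = k then 1 else 0) := by
    intro j k
    have heig : (Dᵀ * D) *ᵥ v k = μ k • v k := hD.mulVec_eigenvectorBasis k
    calc (D *ᵥ v j) ⬝ᵥ (D *ᵥ v k) = v j ⬝ᵥ ((Dᵀ * D) *ᵥ v k) := (dot_shift D D _ _).symm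
      _ = v j ⬝ᵥ (μ k • v k) := by rw [heig]
      _ = μ k * (v j ⬝ᵥ v k) := by rw [dotProduct_smul]; rfl
      _ = _ := by rw [horth]
  have hDv0 : ∀ j, μ j = 0 → D *ᵥ v j = 0 := by
    intro j h0
    have := hDv j j
    rw [h0, zero_mul] at this
    exact dotProduct_self_eq_zero.mp this
  have hsqinv : ∀ j, μ j ≠ 0 → (Real.sqrt (μ j))⁻¹ * ((Real.sqrt (μ j))⁻¹ * μ j) = 1 := by
    intro j h0
    have hpos : 0 < μ j := lt_of_le_of_ne (hμnn j) (Ne.symm h0)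
    have hs : Real.sqrt (μ j) * Real.sqrt (μ j) = μ j := Real.mul_self_sqrt (hμnn j)
    have hsne : Real.sqrt (μ j) ≠ 0 := ne_of_gt (Real.sqrt_pos.mpr hpos)
    rw [← hs]
    field_simp
    rw [Real.sqrt_sq (Real.sqrt_nonneg _)]
  have hudot : ∀ j k, u j ⬝ᵥ u k = if j = k ∧ μ j ≠ 0 then 1 else 0 := by
    intro j k
    have hexp : u j ⬝ᵥ u k
        = (Real.sqrt (μ j))⁻¹ * ((Real.sqrt (μ k))⁻¹ * ((D *ᵥ v j) ⬝ᵥ (D *ᵥ v k))) := by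
      rw [hu]
      simp only [smul_dotProduct, dotProduct_smul, smul_eq_mul]
      ring
    rw [hexp, hDv j k]
    by_cases hjk : j = k
    · subst hjk
      rw [if_pos rfl, mul_one]
      by_cases h0 : μ j = 0
      · simp [h0]
      · rw [if_pos ⟨rfl, h0⟩]
        exact hsqinv j h0
    · simp [hjk]
  have hu0 : ∀ j, μ j = 0 → u j = 0 := by
    intro j h0
    rw [hu]
    simp [hDv0 j h0]
  have key : ∀ j, Real.sqrt (μ j)
      ≤ ((P *ᵥ u j) ⬝ᵥ (P *ᵥ u j) + (Q *ᵥ v j) ⬝ᵥ (Q *ᵥ v j)) / 2 := by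
    intro j
    have hσ : (P *ᵥ u j) ⬝ᵥ (Q *ᵥ v j) = Real.sqrt (μ j) := by
      rw [← dot_shift P Q (u j) (v j), ← hDdef]
      have hexp : u j ⬝ᵥ (D *ᵥ v j) = (Real.sqrt (μ j))⁻¹ * ((D *ᵥ v j) ⬝ᵥ (D *ᵥ v j)) := by
        rw [hu]; simp only [smul_dotProduct, smul_eq_mul]
      rw [hexp, hDv j j, if_pos rfl, mul_one]
      by_cases h0 : μ j = 0
      · simp [h0]
      · have hpos : 0 < μ j := lt_of_le_of_ne (hμnn j) (Ne.symm h0)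
        have hs : Real.sqrt (μ j) * Real.sqrt (μ j) = μ j := Real.mul_self_sqrt (hμnn j)
        have hsne : Real.sqrt (μ j) ≠ 0 := ne_of_gt (Real.sqrt_pos.mpr hpos)
        field_simp
        rw [Real.sq_sqrt (hμnn j)]
    rw [← hσ]
    exact dot_le_half _ _
  set U : Matrix (Fin m) (Fin n) ℝ := Matrix.of fun i j => u j i with hU
  set V : Matrix (Fin n) (Fin n) ℝ := Matrix.of fun i j => v j i with hV
  have hQsum : ∑ j, (Q *ᵥ v j) ⬝ᵥ (Q *ᵥ v j) = frobInner Q Q := by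
    have h1 : ∀ j, (Q *ᵥ v j) ⬝ᵥ (Q *ᵥ v j)
        = (fun i => V i j) ⬝ᵥ ((Qᵀ * Q) *ᵥ fun i => V i j) := by
      intro j
      rw [dot_shift]
      rfl
    rw [Finset.sum_congr rfl fun j _ => h1 j, sum_dot_eq_trace, VVt_eq_one D, mul_one,
      ← frob_trace]
  have hUUt : (U * Uᵀ) * (U * Uᵀ) = U * Uᵀ := by
    have hentry : ∀ k j, (Uᵀ * U) k j = if k = j ∧ μ k ≠ 0 then 1 else 0 := fun k j => hudot k j
    have hmid : U * (Uᵀ * U) = U := by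
      ext i j
      rw [Matrix.mul_apply]
      simp only [hentry]
      rw [Finset.sum_eq_single j]
      · by_cases h0 : μ j = 0
        · have hz : U i j = 0 := by
            show u j i = 0
            rw [hu0 j h0]
            rfl
          simp [h0, hz]
        · simp [h0]
      · intro k _ hkj
        simp [hkj]
      · intro h; exact absurd (Finset.mem_univ j) h
    calc (U * Uᵀ) * (U * Uᵀ) = (U * (Uᵀ * U)) * Uᵀ := by simp only [Matrix.mul_assoc]
      _ = U * Uᵀ := by rw [hmid]
  have hPsum : ∑ j, (P *ᵥ u j) ⬝ᵥ (P *ᵥ u j) ≤ frobInner P P := by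
    have h1 : ∀ j, (P *ᵥ u j) ⬝ᵥ (P *ᵥ u j)
        = (fun i => U i j) ⬝ᵥ ((Pᵀ * P) *ᵥ fun i => U i j) := by
      intro j; rw [dot_shift]; rfl
    rw [Finset.sum_congr rfl fun j _ => h1 j, sum_dot_eq_trace]
    have hproj : 0 ≤ Matrix.trace (Pᵀ * P * (1 - U * Uᵀ)) := by
      apply trace_proj_nonneg
      · rw [Matrix.transpose_sub, Matrix.transpose_one, Matrix.transpose_mul,
          Matrix.transpose_transpose]
      · simp only [Matrix.sub_mul, Matrix.mul_sub, Matrix.one_mul, Matrix.mul_one, hUUt]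
        abel
    rw [Matrix.mul_sub, Matrix.mul_one, Matrix.trace_sub] at hproj
    rw [frob_trace]
    rw [Matrix.mul_assoc] at hproj ⊢
    linarith
  have hsum : nuclearNorm D = ∑ j, Real.sqrt (μ j) := rfl
  calc nuclearNorm D = ∑ j, Real.sqrt (μ j) := hsum
    _ ≤ ∑ j, ((P *ᵥ u j) ⬝ᵥ (P *ᵥ u j) + (Q *ᵥ v j) ⬝ᵥ (Q *ᵥ v j)) / 2 :=
        Finset.sum_le_sum fun j _ => key j
    _ = (∑ j, (P *ᵥ u j) ⬝ᵥ (P *ᵥ u j) + ∑ j, (Q *ᵥ v j) ⬝ᵥ (Q *ᵥ v j)) / 2 := by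
        rw [← Finset.sum_add_distrib, Finset.sum_div]
    _ ≤ (frobInner P P + frobInner Q Q) / 2 := by
        rw [hQsum]; linarith [hPsum]

end NuclearBound

section Convexity

lemma convex_support {m n : ℕ} (g : Matrix (Fin m) (Fin n) ℝ → ℝ)
    (hconv : ConvexOn ℝ Set.univ g) (hg : Differentiable ℝ g)
    (X Y : Matrix (Fin m) (Fin n) ℝ) :
    g X + fderiv ℝ g X (Y - X) ≤ g Y := by
  set φ : ℝ → Matrix (Fin m) (Fin n) ℝ := fun t => X + t • (Y - X) with hφ
  have hline : HasDerivAt φ (Y - X) 0 := by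
    have h1 : HasDerivAt (fun t : ℝ => t • (Y - X)) ((1:ℝ) • (Y - X)) 0 :=
      (hasDerivAt_id 0).smul_const (Y - X)
    have h2 := h1.const_add X
    rw [one_smul] at h2
    exact h2
  have hφ0 : φ 0 = X := by simp [hφ]
  have hcomp : HasDerivAt (fun t : ℝ => g (φ t)) (fderiv ℝ g X (Y - X)) 0 := by
    have h := (hg (φ 0)).hasFDerivAt.comp_hasDerivAt 0 hline
    rw [hφ0] at h
    exact h
  have hcv : ConvexOn ℝ Set.univ fun t : ℝ => g (φ t) := by
    have haff : ConvexOn ℝ ((AffineMap.lineMap X Y : ℝ →ᵃ[ℝ] _) ⁻¹' Set.univ)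
        (g ∘ (AffineMap.lineMap X Y : ℝ →ᵃ[ℝ] _)) := hconv.comp_affineMap _
    have : ((AffineMap.lineMap X Y : ℝ →ᵃ[ℝ] _) ⁻¹' Set.univ) = Set.univ := by simp
    rw [this] at haff
    convert haff using 1
    funext t
    simp [hφ, AffineMap.lineMap_apply, Function.comp]
    abel
  have hslope := hcv.le_slope_of_hasDerivAt (Set.mem_univ (0:ℝ)) (Set.mem_univ (1:ℝ))
    one_pos hcomp
  rw [slope_def_field] at hslope
  have hφ1 : φ 1 = Y := by simp [hφ]
  rw [hφ0, hφ1] at hslope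
  simp at hslope
  rw [map_sub]
  linarith

end Convexity

section FrobAlgebra

variable {m n : Type*} [Fintype m] [Fintype n]

lemma frobInner_sub_right (Z X Y : Matrix m n ℝ) :
    frobInner Z (X - Y) = frobInner Z X - frobInner Z Y := by
  simp only [frobInner, Matrix.sub_apply, mul_sub, Finset.sum_sub_distrib]

lemma frobInner_comm (X Y : Matrix m n ℝ) : frobInner X Y = frobInner Y X := by
  simp only [frobInner, mul_comm]

lemma frobInner_neg_smul_self (c : ℝ) (X : Matrix m n ℝ) :
    frobInner X (-(c • X)) = -(c * frobInner X X) := by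
  simp only [frobInner, Matrix.neg_apply, Matrix.smul_apply, smul_eq_mul, mul_neg,
    Finset.sum_neg_distrib, Finset.mul_sum, neg_inj]
  refine Finset.sum_congr rfl fun i _ => Finset.sum_congr rfl fun j _ => by ring

end FrobAlgebra

theorem critical_point_global_min_nuclear {d m n : ℕ}
    (g : Matrix (Fin m) (Fin n) ℝ → ℝ)
    (G : Matrix (Fin m) (Fin n) ℝ → Matrix (Fin m) (Fin n) ℝ)
    (hconv : ConvexOn ℝ Set.univ g)
    (hg : Differentiable ℝ g)
    (hG : ∀ D H, fderiv ℝ g D H = frobInner (G D) H)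
    (lam : ℝ) (hlam : 0 < lam)
    (A : Matrix (Fin d) (Fin m) ℝ) (B : Matrix (Fin d) (Fin n) ℝ)
    (hA : lam • A = -(B * (G (Aᵀ * B))ᵀ))
    (hB : lam • B = -(A * G (Aᵀ * B)))
    (hop : opNorm (G (Aᵀ * B)) ≤ lam) :
    ∀ D : Matrix (Fin m) (Fin n) ℝ,
      g (Aᵀ * B) + lam * nuclearNorm (Aᵀ * B) ≤ g D + lam * nuclearNorm D := by
  intro D
  set Dbar := Aᵀ * B with hDbar
  set Z := G Dbar with hZ
  -- criticality: frobInner Z Dbar = -(lam * frobInner A A) = -(lam * frobInner B B)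
  have hZA : frobInner Z Dbar = -(lam * frobInner A A) := by
    calc frobInner Z Dbar
        = Matrix.trace (Zᵀ * Dbar) := frob_trace _ _
      _ = Matrix.trace (Dbar * Zᵀ) := Matrix.trace_mul_comm _ _
      _ = Matrix.trace (Aᵀ * (B * Zᵀ)) := by rw [hDbar, Matrix.mul_assoc]
      _ = frobInner A (B * Zᵀ) := (frob_trace _ _).symm
      _ = frobInner A (-(lam • A)) := by
            rw [show B * Zᵀ = -(lam • A) by rw [hA, neg_neg]]
      _ = -(lam * frobInner A A) := frobInner_neg_smul_self _ _
  have hZB : frobInner Z Dbar = -(lam * frobInner B B) := by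
    calc frobInner Z Dbar
        = Matrix.trace (Zᵀ * Dbar) := frob_trace _ _
      _ = Matrix.trace ((Zᵀ * Aᵀ) * B) := by rw [hDbar, Matrix.mul_assoc]
      _ = Matrix.trace ((A * Z)ᵀ * B) := by rw [Matrix.transpose_mul]
      _ = frobInner (A * Z) B := (frob_trace _ _).symm
      _ = frobInner B (A * Z) := frobInner_comm _ _
      _ = frobInner B (-(lam • B)) := by
            rw [show A * Z = -(lam • B) by rw [hB, neg_neg]]
      _ = -(lam * frobInner B B) := frobInner_neg_smul_self _ _
  -- nuclear norm bound at critical point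
  have hnuc : nuclearNorm Dbar ≤ (frobInner A A + frobInner B B) / 2 := nuclear_le A B
  have h1 : lam * nuclearNorm Dbar + frobInner Z Dbar ≤ 0 := by
    have : lam * nuclearNorm Dbar ≤ lam * ((frobInner A A + frobInner B B) / 2) :=
      mul_le_mul_of_nonneg_left hnuc (le_of_lt hlam)
    have heq : frobInner Z Dbar = -(lam * ((frobInner A A + frobInner B B) / 2)) := by
      have hexp : lam * ((frobInner A A + frobInner B B) / 2)
          = (lam * frobInner A A + lam * frobInner B B) / 2 := by ring
      rw [hexp]
      linarith [hZA, hZB]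
    linarith
  -- duality bound for arbitrary D
  have h2 : -(frobInner Z D) ≤ lam * nuclearNorm D := by
    have habs := abs_frobInner_le Z D
    have hmul : opNorm Z * nuclearNorm D ≤ lam * nuclearNorm D :=
      mul_le_mul_of_nonneg_right hop (nuclearNorm_nonneg D)
    have := neg_abs_le (frobInner Z D)
    linarith
  -- convexity
  have h3 : g Dbar + frobInner Z (D - Dbar) ≤ g D := by
    have := convex_support g hconv hg Dbar D
    rwa [hG Dbar (D - Dbar), ← hZ] at this
  rw [frobInner_sub_right] at h3
  linarith
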